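/- Duality of backward shocks, second identity (Lemma 3.1, second equality of (3.14)): Let f, θ, T be as in the context, let A < θ and L ∈ (T·f'(A), 0), and let x : [L/f'(A), T] → ℝ be a solution of the right backward-shock Cauchy problem with data (L,A). Set R := x(T) (which lies in (0, T·f'(Ā))) and t₀ := R/f'(Ā) ∈ (0,T). Note that Ā > θ, that (for B := Ā) the point B̄ equals A, and that R ∈ (0, T·f'(Ā)), so the left backward-shock Cauchy problem with data (R, Ā) makes sense: it asks for y : [t₀,T] → ℝ with y(t₀) = 0 and y'(t) = λ((f')⁻¹((y(t)+R)/t), A). Then every solution y of this problem satisfies y(T) = L. -/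

import Mathlib

noncomputable section

open Set Filter

/-- The Rankine–Hugoniot speed `λ(u,v) = (f(v) - f(u)) / (v - u)`. -/
def lamF (f : ℝ → ℝ) (u v : ℝ) : ℝ := (f v - f u) / (v - u)

/-- `y` solves the left backward-shock Cauchy problem with data `(R, B)` on
`[R / f'(B), T]`:  `y(R/f'(B)) = 0` and `y'(t) = λ((f')⁻¹((y(t)+R)/t), B̄)`.
Here `finv` denotes the inverse of `deriv f`. -/
def LeftShockSol (f finv : ℝ → ℝ) (T B Bbar R : ℝ) (y : ℝ → ℝ) : Prop :=
  y (R / deriv f B) = 0 ∧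
  ∀ t ∈ Icc (R / deriv f B) T,
    HasDerivWithinAt y (lamF f (finv ((y t + R) / t)) Bbar) (Icc (R / deriv f B) T) t

/-- `x` solves the right backward-shock Cauchy problem with data `(L, A)` on
`[L / f'(A), T]`:  `x(L/f'(A)) = 0` and `x'(t) = λ((f')⁻¹((x(t)+L)/t), Ā)`.
Here `finv` denotes the inverse of `deriv f`. -/
def RightShockSol (f finv : ℝ → ℝ) (T A Abar L : ℝ) (x : ℝ → ℝ) : Prop :=
  x (L / deriv f A) = 0 ∧
  ∀ t ∈ Icc (L / deriv f A) T,
    HasDerivWithinAt x (lamF f (finv ((x t + L) / t)) Abar) (Icc (L / deriv f A) T) t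

/-- The conserved quantity along a backward shock curve. -/
private def shockPhi (f finv : ℝ → ℝ) (c K : ℝ) (z : ℝ → ℝ) (t : ℝ) : ℝ :=
  t * f c - t * f (finv ((z t + K) / t)) - (c - finv ((z t + K) / t)) * (z t + K)

/-- The conserved quantity is indeed conserved. -/
private lemma shockPhi_const (f finv : ℝ → ℝ) (a : ℝ) (ha : 0 < a) (hf : ContDiff ℝ 2 f)
    (hf2 : ∀ u : ℝ, a ≤ deriv (deriv f) u)
    (hfinv2 : ∀ p : ℝ, deriv f (finv p) = p)
    (hfinvC : Continuous finv)
    (hfinvD : ∀ p : ℝ, HasDerivAt finv (deriv (deriv f) (finv p))⁻¹ p)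
    (s T c K : ℝ) (hs : 0 < s) (hsT : s ≤ T) (z : ℝ → ℝ)
    (hz : ∀ t ∈ Icc s T, HasDerivWithinAt z (lamF f (finv ((z t + K) / t)) c) (Icc s T) t) :
    ∀ t ∈ Icc s T, shockPhi f finv c K z t = shockPhi f finv c K z s := by
  have hfd : Differentiable ℝ f := hf.differentiable (by norm_num)
  have h2 : ContDiff ℝ (1+1) f := by norm_num at hf ⊢; exact hf
  have h1 : ContDiff ℝ 1 (deriv f) := (contDiff_succ_iff_deriv.mp h2).2.2
  have hd2 : Differentiable ℝ (deriv f) := (contDiff_one_iff_deriv.mp h1).1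
  have hzc : ContinuousOn z (Icc s T) := fun t ht => (hz t ht).continuousWithinAt
  have hqc : ContinuousOn (fun t => (z t + K) / t) (Icc s T) :=
    (hzc.add continuousOn_const).div continuousOn_id
      (fun t ht => ne_of_gt (lt_of_lt_of_le hs ht.1))
  apply constant_of_has_deriv_right_zero
  · -- continuity of Φ
    unfold shockPhi
    exact ((continuousOn_id.mul continuousOn_const).sub
        (continuousOn_id.mul ((hfd.continuous.comp hfinvC).comp_continuousOn hqc))).sub
      ((continuousOn_const.sub (hfinvC.comp_continuousOn hqc)).mul (hzc.add continuousOn_const))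
  · intro t ht
    have htT : t < T := ht.2
    have hts : s ≤ t := ht.1
    have ht' : t ∈ Icc s T := ⟨hts, le_of_lt htT⟩
    have htpos : 0 < t := lt_of_lt_of_le hs hts
    have htne : t ≠ 0 := ne_of_gt htpos
    set u : ℝ := finv ((z t + K) / t) with hu
    set z' : ℝ := lamF f u c with hz'
    have hp : (0:ℝ) < deriv (deriv f) u := lt_of_lt_of_le ha (hf2 u)
    have hpne : deriv (deriv f) u ≠ 0 := ne_of_gt hp
    -- derivative of q(t) = (z t + K)/t within Icc s T
    have hq : HasDerivWithinAt (fun r => (z r + K) / r)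
        ((z' * t - (z t + K) * 1) / t ^ 2) (Icc s T) t := by
      exact HasDerivWithinAt.div ((hz t ht').add_const K) (hasDerivWithinAt_id t _) htne
    set q' : ℝ := (z' * t - (z t + K) * 1) / t ^ 2 with hq'def
    have hU : HasDerivWithinAt (fun r => finv ((z r + K) / r))
        ((deriv (deriv f) u)⁻¹ * q') (Icc s T) t :=
      HasDerivAt.comp_hasDerivWithinAt (h := fun r => (z r + K) / r) t (hfinvD _) hq
    have hfU : HasDerivWithinAt (fun r => f (finv ((z r + K) / r)))
        (deriv f u * ((deriv (deriv f) u)⁻¹ * q')) (Icc s T) t :=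
      HasDerivAt.comp_hasDerivWithinAt (h := fun r => finv ((z r + K) / r)) t
        ((hfd u).hasDerivAt) hU
    have hPhi : HasDerivWithinAt
        (fun r => r * f c - r * f (finv ((z r + K) / r))
          - (c - finv ((z r + K) / r)) * (z r + K))
        ((1 * f c) - (1 * f u + t * (deriv f u * ((deriv (deriv f) u)⁻¹ * q')))
          - ((0 - (deriv (deriv f) u)⁻¹ * q') * (z t + K) + (c - u) * z')) (Icc s T) t := by
      apply HasDerivWithinAt.sub
      apply HasDerivWithinAt.sub
      · exact (hasDerivWithinAt_id t _).mul_const (f c)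
      · exact (hasDerivWithinAt_id t _).mul hfU
      · exact (((hasDerivWithinAt_const t _ c).sub hU).mul ((hz t ht').add_const K))
    have hval : (1 * f c) - (1 * f u + t * (deriv f u * ((deriv (deriv f) u)⁻¹ * q')))
          - ((0 - (deriv (deriv f) u)⁻¹ * q') * (z t + K) + (c - u) * z') = 0 := by
      have hfu : deriv f u = (z t + K) / t := hfinv2 _
      have hcancel : t * (deriv f u * ((deriv (deriv f) u)⁻¹ * q'))
          = (deriv (deriv f) u)⁻¹ * q' * (z t + K) := by
        rw [hfu]; field_simp
      rw [hcancel]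
      have hlam : (c - u) * z' = f c - f u := by
        rcases eq_or_ne c u with hcu | hcu
        · simp [hz', lamF, hcu]
        · rw [hz', lamF]
          field_simp [sub_ne_zero.mpr hcu]
      rw [hlam]; ring
    rw [hval] at hPhi
    -- transfer from Icc s T to Ici t
    show HasDerivWithinAt _ 0 (Ici t) t
    apply hPhi.mono_of_mem_nhdsWithin
    rw [mem_nhdsWithin]
    exact ⟨Iio T, isOpen_Iio, htT, fun r hr => ⟨hts.trans hr.2, hr.1.le⟩⟩

/-- **Lemma 3.1, second equality of (3.14)**: the left backward shock with data
`(x(T), Ā)` is dual to the right backward shock with data `(L, A)`. -/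
theorem backward_shock_duality_second
    (f : ℝ → ℝ) (a : ℝ) (ha : 0 < a) (hf : ContDiff ℝ 2 f)
    (hf2 : ∀ u : ℝ, a ≤ deriv (deriv f) u)
    (θ : ℝ) (hθ : deriv f θ = 0)
    (finv : ℝ → ℝ) (hfinv1 : ∀ u : ℝ, finv (deriv f u) = u)
    (hfinv2 : ∀ p : ℝ, deriv f (finv p) = p)
    (T : ℝ) (hT : 0 < T)
    (A Abar : ℝ) (hA : A < θ) (hAbar1 : θ ≤ Abar) (hAbar2 : f Abar = f A)
    (L : ℝ) (hL : L ∈ Ioo (T * deriv f A) (0:ℝ))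
    (x : ℝ → ℝ) (hx : RightShockSol f finv T A Abar L x)
    (hxT : x T ∈ Ioo (0:ℝ) (T * deriv f Abar))
    (y : ℝ → ℝ) (hy : LeftShockSol f finv T Abar A (x T) y) :
    y T = L := by
  have hTne : T ≠ 0 := ne_of_gt hT
  have hfd : Differentiable ℝ f := hf.differentiable (by norm_num)
  have h2 : ContDiff ℝ (1+1) f := by norm_num at hf ⊢; exact hf
  have h1 : ContDiff ℝ 1 (deriv f) := (contDiff_succ_iff_deriv.mp h2).2.2
  have hd2 : Differentiable ℝ (deriv f) := (contDiff_one_iff_deriv.mp h1).1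
  have hsm : StrictMono (deriv f) :=
    strictMono_of_deriv_pos (fun u => lt_of_lt_of_le ha (hf2 u))
  have hfinv_sm : StrictMono finv := by
    intro p q hpq
    by_contra h
    push_neg at h
    have : q ≤ p := by
      have := hsm.le_iff_le.mpr h
      rwa [hfinv2, hfinv2] at this
    exact absurd hpq (not_lt.mpr this)
  have hfinv_surj : Function.Surjective finv := fun u => ⟨deriv f u, hfinv1 u⟩
  have hfinvC : Continuous finv := by
    have h := OrderIso.continuous (StrictMono.orderIsoOfSurjective finv hfinv_sm hfinv_surj)
    rwa [StrictMono.coe_orderIsoOfSurjective] at h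
  have hfinvD : ∀ p : ℝ, HasDerivAt finv (deriv (deriv f) (finv p))⁻¹ p := fun p =>
    HasDerivAt.of_local_left_inverse hfinvC.continuousAt
      ((hd2 (finv p)).hasDerivAt) (ne_of_gt (lt_of_lt_of_le ha (hf2 _)))
      (Eventually.of_forall hfinv2)
  -- basic sign facts
  have hAAbar : A < Abar := lt_of_lt_of_le hA hAbar1
  have hdA : deriv f A < 0 := by
    have := hsm hA; rwa [hθ] at this
  have hdAbar : 0 < deriv f Abar := by
    have h0 : 0 < T * deriv f Abar := lt_trans hxT.1 hxT.2
    nlinarith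
  set R : ℝ := x T with hR
  have hRpos : 0 < R := hxT.1
  have hRlt : R < T * deriv f Abar := hxT.2
  set t₁ : ℝ := L / deriv f A with ht₁
  set t₀ : ℝ := R / deriv f Abar with ht₀
  have hLneg : L < 0 := hL.2
  have hLne : L ≠ 0 := ne_of_lt hLneg
  have ht₁pos : 0 < t₁ := div_pos_of_neg_of_neg hLneg hdA
  have ht₁T : t₁ ≤ T := le_of_lt ((div_lt_iff_of_neg hdA).mpr hL.1)
  have ht₀pos : 0 < t₀ := div_pos hRpos hdAbar
  have ht₀T : t₀ ≤ T := le_of_lt ((div_lt_iff₀ hdAbar).mpr hRlt)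
  -- conserved quantities
  have hΦ := shockPhi_const f finv a ha hf hf2 hfinv2 hfinvC hfinvD t₁ T Abar L ht₁pos ht₁T x
    hx.2 T ⟨ht₁T, le_refl T⟩
  have hΨall := shockPhi_const f finv a ha hf hf2 hfinv2 hfinvC hfinvD t₀ T A R ht₀pos ht₀T y
    hy.2
  have hΨ := hΨall T ⟨ht₀T, le_refl T⟩
  -- evaluate conserved quantities at the left endpoints
  have hq₁ : (x t₁ + L) / t₁ = deriv f A := by
    rw [hx.1]; rw [ht₁]; field_simp; ring
  have hq₀ : (y t₀ + R) / t₀ = deriv f Abar := by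
    rw [hy.1]; rw [ht₀]; field_simp; ring
  have hΦ₁ : shockPhi f finv Abar L x t₁ = -(Abar - A) * L := by
    unfold shockPhi
    rw [hq₁, hfinv1, hx.1, hAbar2]; ring
  have hΨ₀ : shockPhi f finv A R y t₀ = (Abar - A) * R := by
    unfold shockPhi
    rw [hq₀, hfinv1, hy.1, hAbar2]; ring
  set uT : ℝ := finv ((x T + L) / T) with huT
  set vT : ℝ := finv ((y T + R) / T) with hvT
  have hTfu : T * deriv f uT = R + L := by
    rw [huT, hfinv2]; field_simp; rfl
  have hTfv : T * deriv f vT = y T + R := by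
    rw [hvT, hfinv2]; field_simp
  have hstar : T * f Abar - T * f uT - (Abar - uT) * (x T + L) = -(Abar - A) * L := by
    have := hΦ; rw [hΦ₁] at this
    unfold shockPhi at this
    rw [← huT] at this
    linarith [this]
  have hstar2 : T * f A - T * f vT - (A - vT) * (y T + R) = (Abar - A) * R := by
    have := hΨ; rw [hΨ₀] at this
    unfold shockPhi at this
    rw [← hvT] at this
    linarith [this]
  -- the function H
  set H : ℝ → ℝ := fun v => f A - f v - deriv f v * (A - v) with hHdef
  have e1 : T * H uT = (Abar - A) * R := by
    simp only [hHdef]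
    linear_combination hstar - (A - uT) * hTfu - T * hAbar2
  have e2 : T * H vT = (Abar - A) * R := by
    simp only [hHdef]
    linear_combination hstar2 - (A - vT) * hTfv
  have hHuv : H uT = H vT := by
    have : T * H uT = T * H vT := by rw [e1, e2]
    exact mul_left_cancel₀ hTne this
  -- H is strictly monotone on [A, ∞)
  have hHderiv : ∀ v : ℝ, HasDerivAt H (deriv (deriv f) v * (v - A)) v := by
    intro v
    have h1 : HasDerivAt (fun w => f A - f w - deriv f w * (A - w))
        ((0 - deriv f v) - (deriv (deriv f) v * (A - v) + deriv f v * (0 - 1))) v := by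
      exact ((hasDerivAt_const v (f A)).sub (hfd v).hasDerivAt).sub
        (((hd2 v).hasDerivAt).mul ((hasDerivAt_const v A).sub (hasDerivAt_id v)))
    have : (0 - deriv f v) - (deriv (deriv f) v * (A - v) + deriv f v * (0 - 1))
        = deriv (deriv f) v * (v - A) := by ring
    rw [this] at h1
    exact h1
  have hHmono : StrictMonoOn H (Ici A) := by
    apply strictMonoOn_of_deriv_pos (convex_Ici A)
    · exact Continuous.continuousOn (by
        exact (continuous_const.sub hfd.continuous).sub
          (hd2.continuous.mul (continuous_const.sub continuous_id)))
    · intro v hv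
      rw [interior_Ici] at hv
      rw [(hHderiv v).deriv]
      exact mul_pos (lt_of_lt_of_le ha (hf2 v)) (sub_pos.mpr hv)
  -- uT > A
  have huTA : A < uT := by
    have h1 : deriv f A < (x T + L) / T := by
      rw [lt_div_iff₀ hT]
      have : T * deriv f A < L := hL.1
      linarith [hRpos]
    have := hfinv_sm h1
    rwa [hfinv1] at this
  -- vT > A, via the conserved quantity never vanishing
  have hvne : ∀ t ∈ Icc t₀ T, finv ((y t + R) / t) ≠ A := by
    intro t ht hcon
    have h0 : shockPhi f finv A R y t = 0 := by
      unfold shockPhi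
      rw [hcon]
      ring
    have := hΨall t ht
    rw [hΨ₀, h0] at this
    have hpos : 0 < (Abar - A) * R := mul_pos (sub_pos.mpr hAAbar) hRpos
    linarith
  have hycont : ContinuousOn y (Icc t₀ T) := fun t ht => (hy.2 t ht).continuousWithinAt
  have hvcont : ContinuousOn (fun t => finv ((y t + R) / t)) (Icc t₀ T) := by
    apply hfinvC.comp_continuousOn
    exact (hycont.add continuousOn_const).div continuousOn_id
      (fun t ht => ne_of_gt (lt_of_lt_of_le ht₀pos ht.1))
  have hv₀ : finv ((y t₀ + R) / t₀) = Abar := by rw [hq₀, hfinv1]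
  have hvTA : A < vT := by
    by_contra hcon
    push_neg at hcon
    have hvTlt : vT < A := lt_of_le_of_ne hcon (by
      intro h; exact hvne T ⟨ht₀T, le_refl T⟩ (by rw [← hvT]; exact h))
    have hsub := intermediate_value_Icc' ht₀T hvcont
    have hmem : A ∈ Icc ((fun t => finv ((y t + R) / t)) T) ((fun t => finv ((y t + R) / t)) t₀) := by
      simp only [hv₀]
      exact ⟨le_of_lt (by rw [← hvT] at *; exact hvTlt), le_of_lt hAAbar⟩
    obtain ⟨s, hs, hsA⟩ := hsub hmem
    exact hvne s hs hsA
  -- conclude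
  have huv : uT = vT := hHmono.injOn (le_of_lt huTA) (le_of_lt hvTA) hHuv
  have : (x T + L) / T = (y T + R) / T := by
    have h1 := hfinv2 ((x T + L) / T)
    have h2 := hfinv2 ((y T + R) / T)
    rw [← huT] at h1; rw [← hvT] at h2
    rw [← h1, ← h2, huv]
  field_simp at this
  linarith
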